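/- arXiv:2511.07456 — 2 statements merged into one kernel-verified Lean document; each statement's English description precedes it below -/
import Mathlib

section
/- There exists ε > 0 such that for every odd m, no matrix b ∈ M_m(ℂ) with ‖b‖_OP ≤ 1 satisfies both ‖b*b − (b*b)²‖_OP < ε and ‖b*b + bb* − 1_m‖_OP < ε. (In fact ε = 1/4 works.) -/
open Matrix


/-- Euclidean norm of a complex `m`-vector. -/
noncomputable def vecNorm {m : ℕ} (ξ : Fin m → ℂ) : ℝ :=
  Real.sqrt (∑ i, ‖ξ i‖ ^ 2)

/-- Operator norm of an `m × m` complex matrix: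
the supremum of `‖a ξ‖` over unit vectors `ξ`. -/
noncomputable def opNorm {m : ℕ} (a : Matrix (Fin m) (Fin m) ℂ) : ℝ :=
  sSup {r : ℝ | ∃ ξ : Fin m → ℂ, vecNorm ξ = 1 ∧ r = vecNorm (a.mulVec ξ)}

/-- Normalized Hilbert–Schmidt norm of an `m × m` complex matrix. -/
noncomputable def hsNorm {m : ℕ} (a : Matrix (Fin m) (Fin m) ℂ) : ℝ :=
  Real.sqrt ((1 / (m : ℝ)) * ∑ i, ∑ j, ‖a i j‖ ^ 2)

set_option maxHeartbeats 1000000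

namespace NoHalf
variable {m : ℕ}
local notation "H" => EuclideanSpace ℂ (Fin m)

lemma vecNorm_eq (x : H) : vecNorm x = ‖x‖ := by
  rw [EuclideanSpace.norm_eq, vecNorm]

/-- identity "cast" into Euclidean space -/
def toH (ξ : Fin m → ℂ) : H := WithLp.toLp 2 ξ

lemma bddAbove_S (a : Matrix (Fin m) (Fin m) ℂ) :
    BddAbove {r : ℝ | ∃ ξ : Fin m → ℂ, vecNorm ξ = 1 ∧ r = vecNorm (a.mulVec ξ)} := by
  refine ⟨‖LinearMap.toContinuousLinearMap (Matrix.toEuclideanLin a)‖, ?_⟩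
  rintro r ⟨ξ, hξ, rfl⟩
  have h1 : vecNorm (a.mulVec ξ) = ‖Matrix.toEuclideanLin a (toH ξ)‖ := vecNorm_eq (Matrix.toEuclideanLin a (toH ξ))
  have h2 : vecNorm ξ = ‖toH ξ‖ := vecNorm_eq (toH ξ)
  rw [h1]
  calc ‖Matrix.toEuclideanLin a (toH ξ)‖
      = ‖LinearMap.toContinuousLinearMap (Matrix.toEuclideanLin a) (toH ξ)‖ := rfl
    _ ≤ ‖LinearMap.toContinuousLinearMap (Matrix.toEuclideanLin a)‖ * ‖toH ξ‖ :=
        (LinearMap.toContinuousLinearMap (Matrix.toEuclideanLin a)).le_opNorm _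
    _ = _ := by rw [← h2, hξ, mul_one]

lemma mulVec_le (a : Matrix (Fin m) (Fin m) ℂ) (x : H) (hx : ‖x‖ = 1) :
    ‖Matrix.toEuclideanLin a x‖ ≤ opNorm a :=
  le_csSup (bddAbove_S a) ⟨x, by rw [vecNorm_eq, hx], (vecNorm_eq _).symm⟩

lemma mem_span_iff (v : OrthonormalBasis (Fin m) ℂ H) (P : Fin m → Prop) (x : H) :
    x ∈ Submodule.span ℂ (v '' {i | P i}) ↔ ∀ i, ¬ P i → inner ℂ (v i) x = (0 : ℂ) := by
  constructor
  · intro hx i hi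
    induction hx using Submodule.span_induction with
    | mem y hy =>
      obtain ⟨j, hj, rfl⟩ := hy
      exact v.orthonormal.2 (fun h => hi (by rwa [h]))
    | zero => exact inner_zero_right _
    | add y z _ _ hy hz => rw [inner_add_right, hy, hz, add_zero]
    | smul c y _ hy => rw [inner_smul_right, hy, mul_zero]
  · intro h
    have hx : x = ∑ i, (inner ℂ (v i) x : ℂ) • v i := (v.sum_repr' x).symm
    rw [hx]
    refine Submodule.sum_mem _ fun i _ => ?_
    by_cases hP : P i
    · exact Submodule.smul_mem _ _ (Submodule.subset_span ⟨i, hP, rfl⟩)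
    · rw [h i hP, zero_smul]
      exact Submodule.zero_mem _

lemma finrank_span (v : OrthonormalBasis (Fin m) ℂ H) (P : Fin m → Prop) [DecidablePred P] :
    Module.finrank ℂ (Submodule.span ℂ (v '' {i | P i})) = (Finset.univ.filter P).card := by
  have h1 : v '' {i | P i} = Set.range (v ∘ (Subtype.val : {i // P i} → Fin m)) := by
    rw [Set.range_comp]; congr 1; ext i; simp
  rw [h1, finrank_span_eq_card (v.orthonormal.linearIndependent.comp _ Subtype.val_injective)]
  rw [Fintype.card_subtype]

lemma norm_sq_eq (v : OrthonormalBasis (Fin m) ℂ H) (x : H) :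
    ‖x‖ ^ 2 = ∑ i, ‖(inner ℂ (v i) x : ℂ)‖ ^ 2 := by
  rw [← v.repr.norm_map x, EuclideanSpace.norm_eq, Real.sq_sqrt (by positivity)]
  exact Finset.sum_congr rfl fun i _ => by rw [v.repr_apply_apply]

lemma qf_eq (a : Matrix (Fin m) (Fin m) ℂ) (hA : a.IsHermitian) (x : H) :
    RCLike.re (inner ℂ x (Matrix.toEuclideanLin a x) : ℂ)
      = ∑ i, hA.eigenvalues i * ‖(inner ℂ (hA.eigenvectorBasis i) x : ℂ)‖ ^ 2 := by
  have hsym := (Matrix.isHermitian_iff_isSymmetric.mp hA)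
  rw [← (hA.eigenvectorBasis).sum_inner_mul_inner x (Matrix.toEuclideanLin a x), map_sum]
  refine Finset.sum_congr rfl fun i _ => ?_
  have h1 : (inner ℂ (hA.eigenvectorBasis i) (Matrix.toEuclideanLin a x) : ℂ)
      = inner ℂ (Matrix.toEuclideanLin a (hA.eigenvectorBasis i)) x := (hsym _ _).symm
  have h2 : Matrix.toEuclideanLin a (hA.eigenvectorBasis i)
      = hA.eigenvalues i • (hA.eigenvectorBasis i : H) := congrArg (WithLp.toLp 2) (hA.mulVec_eigenvectorBasis i)
  rw [h1, h2, RCLike.real_smul_eq_coe_smul (K := ℂ), inner_smul_left]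
  set c : ℂ := inner ℂ (hA.eigenvectorBasis i) x with hc
  have h3 : (inner ℂ x (hA.eigenvectorBasis i) : ℂ) = starRingEnd ℂ c := (inner_conj_symm _ _).symm
  rw [h3, RCLike.conj_ofReal, mul_left_comm, RCLike.conj_mul]
  simp [← Complex.ofReal_pow]

lemma qf_ge (a : Matrix (Fin m) (Fin m) ℂ) (hA : a.IsHermitian) (P : Fin m → Prop) (c : ℝ)
    (h : ∀ i, P i → c ≤ hA.eigenvalues i) (x : H)
    (hx : x ∈ Submodule.span ℂ (hA.eigenvectorBasis '' {i | P i})) :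
    c * ‖x‖ ^ 2 ≤ RCLike.re (inner ℂ x (Matrix.toEuclideanLin a x) : ℂ) := by
  rw [qf_eq a hA x, norm_sq_eq hA.eigenvectorBasis x, Finset.mul_sum]
  refine Finset.sum_le_sum fun i _ => ?_
  by_cases hP : P i
  · exact mul_le_mul_of_nonneg_right (h i hP) (by positivity)
  · rw [(mem_span_iff _ _ _).mp hx i hP]; simp

lemma qf_le (a : Matrix (Fin m) (Fin m) ℂ) (hA : a.IsHermitian) (P : Fin m → Prop) (c : ℝ)
    (h : ∀ i, P i → hA.eigenvalues i ≤ c) (x : H)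
    (hx : x ∈ Submodule.span ℂ (hA.eigenvectorBasis '' {i | P i})) :
    RCLike.re (inner ℂ x (Matrix.toEuclideanLin a x) : ℂ) ≤ c * ‖x‖ ^ 2 := by
  rw [qf_eq a hA x, norm_sq_eq hA.eigenvectorBasis x, Finset.mul_sum]
  refine Finset.sum_le_sum fun i _ => ?_
  by_cases hP : P i
  · exact mul_le_mul_of_nonneg_right (h i hP) (by positivity)
  · rw [(mem_span_iff _ _ _).mp hx i hP]; simp

lemma toEuclideanLin_mul (a c : Matrix (Fin m) (Fin m) ℂ) (x : H) :
    Matrix.toEuclideanLin (a * c) x = Matrix.toEuclideanLin a (Matrix.toEuclideanLin c x) :=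
  congrArg (WithLp.toLp 2) (Matrix.mulVec_mulVec x.ofLp a c).symm

lemma norm_sq_apply (a : Matrix (Fin m) (Fin m) ℂ) (x : H) :
    ‖Matrix.toEuclideanLin a x‖ ^ 2
      = RCLike.re (inner ℂ x (Matrix.toEuclideanLin (aᴴ * a) x) : ℂ) := by
  rw [toEuclideanLin_mul, Matrix.toEuclideanLin_conjTranspose_eq_adjoint,
    LinearMap.adjoint_inner_right, inner_self_eq_norm_sq]


lemma re_inner_smul (x : H) (t : ℝ) (hx : ‖x‖ = 1) :
    RCLike.re (inner ℂ x (t • x) : ℂ) = t := by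
  rw [RCLike.real_smul_eq_coe_smul (K := ℂ), inner_smul_right]
  rw [RCLike.re_ofReal_mul, inner_self_eq_norm_sq, hx]; ring

lemma eig_bounds (b : Matrix (Fin m) (Fin m) ℂ) (hb : opNorm b ≤ 1)
    (h1 : opNorm (bᴴ * b - (bᴴ * b) * (bᴴ * b)) < 3/16)
    (x : H) (t : ℝ) (hx : ‖x‖ = 1)
    (hex : Matrix.toEuclideanLin (bᴴ * b) x = t • x) :
    0 ≤ t ∧ t ≤ 1 ∧ t * (1 - t) < 3/16 := by
  have hre : RCLike.re (inner ℂ x (Matrix.toEuclideanLin (bᴴ * b) x) : ℂ) = t := by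
    rw [hex]; exact re_inner_smul x t hx
  have hbn : ‖Matrix.toEuclideanLin b x‖ ^ 2 = t := by rw [norm_sq_apply, hre]
  have ht0 : 0 ≤ t := hbn ▸ sq_nonneg _
  have hble : ‖Matrix.toEuclideanLin b x‖ ≤ 1 := (mulVec_le b x hx).trans hb
  have ht1 : t ≤ 1 := by nlinarith [norm_nonneg (Matrix.toEuclideanLin b x)]
  have hsub : Matrix.toEuclideanLin (bᴴ * b - (bᴴ * b) * (bᴴ * b)) x = (t - t * t) • x := by
    have e1 : Matrix.toEuclideanLin ((bᴴ * b) * (bᴴ * b)) x = (t * t) • x := by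
      rw [toEuclideanLin_mul, hex, RCLike.real_smul_eq_coe_smul (K := ℂ), _root_.map_smul, hex]
      rw [RCLike.real_smul_eq_coe_smul (K := ℂ) (r := t), RCLike.real_smul_eq_coe_smul (K := ℂ) (r := t*t)]
      rw [smul_smul]; norm_cast
    rw [map_sub, LinearMap.sub_apply, hex, e1, ← sub_smul]
  have hnorm : ‖Matrix.toEuclideanLin (bᴴ * b - (bᴴ * b) * (bᴴ * b)) x‖ = |t - t * t| := by
    rw [hsub, norm_smul, Real.norm_eq_abs, hx, mul_one]
  have := (mulVec_le _ x hx).trans_lt h1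
  rw [hnorm] at this
  refine ⟨ht0, ht1, ?_⟩
  calc t * (1 - t) ≤ |t - t * t| := by rw [abs_of_nonneg (by nlinarith)]; ring_nf; exact le_refl _
    _ < 3/16 := this

lemma cross_bound (b : Matrix (Fin m) (Fin m) ℂ)
    (h2 : opNorm (bᴴ * b + b * bᴴ - 1) < 3/16) (x : H) (hx : ‖x‖ = 1) :
    |RCLike.re (inner ℂ x (Matrix.toEuclideanLin (bᴴ * b) x) : ℂ)
      + RCLike.re (inner ℂ x (Matrix.toEuclideanLin (b * bᴴ) x) : ℂ) - 1| < 3/16 := by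
  have hdec : Matrix.toEuclideanLin (bᴴ * b + b * bᴴ - 1) x
      = Matrix.toEuclideanLin (bᴴ * b) x + Matrix.toEuclideanLin (b * bᴴ) x - x := by
    rw [map_sub, map_add, LinearMap.sub_apply, LinearMap.add_apply]
    congr 1
    exact congrArg (WithLp.toLp 2) (Matrix.one_mulVec x.ofLp)
  have key : RCLike.re (inner ℂ x (Matrix.toEuclideanLin (bᴴ * b + b * bᴴ - 1) x) : ℂ)
      = RCLike.re (inner ℂ x (Matrix.toEuclideanLin (bᴴ * b) x) : ℂ)
        + RCLike.re (inner ℂ x (Matrix.toEuclideanLin (b * bᴴ) x) : ℂ) - 1 := by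
    rw [hdec, inner_sub_right, inner_add_right, map_sub, map_add, inner_self_eq_norm_sq, hx]
    norm_num
  rw [← key]
  calc |RCLike.re (inner ℂ x (Matrix.toEuclideanLin (bᴴ * b + b * bᴴ - 1) x) : ℂ)|
      ≤ ‖(inner ℂ x (Matrix.toEuclideanLin (bᴴ * b + b * bᴴ - 1) x) : ℂ)‖ := RCLike.abs_re_le_norm _
    _ ≤ ‖x‖ * ‖Matrix.toEuclideanLin (bᴴ * b + b * bᴴ - 1) x‖ := norm_inner_le_norm _ _
    _ ≤ opNorm (bᴴ * b + b * bᴴ - 1) := by rw [hx, one_mul]; exact mulVec_le _ x hx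
    _ < 3/16 := h2

lemma eig_inner_zero (p q a : Matrix (Fin m) (Fin m) ℂ) (hp : p.IsHermitian)
    (hq : q.IsHermitian) (hqa : q * a = a * p) (i j : Fin m)
    (hne : hq.eigenvalues j ≠ hp.eigenvalues i) :
    inner ℂ (hq.eigenvectorBasis j) (Matrix.toEuclideanLin a (hp.eigenvectorBasis i)) = (0 : ℂ) := by
  set y : H := Matrix.toEuclideanLin a (hp.eigenvectorBasis i) with hy
  have h1 : Matrix.toEuclideanLin q y = hp.eigenvalues i • y := by
    rw [hy, ← toEuclideanLin_mul, hqa, toEuclideanLin_mul]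
    have : Matrix.toEuclideanLin p (hp.eigenvectorBasis i)
        = hp.eigenvalues i • (hp.eigenvectorBasis i : H) := congrArg (WithLp.toLp 2) (hp.mulVec_eigenvectorBasis i)
    rw [this, RCLike.real_smul_eq_coe_smul (K := ℂ), _root_.map_smul,
      RCLike.real_smul_eq_coe_smul (K := ℂ)]
  have hsymq := Matrix.isHermitian_iff_isSymmetric.mp hq
  have h2 : (inner ℂ (hq.eigenvectorBasis j) (Matrix.toEuclideanLin q y) : ℂ)
      = (hq.eigenvalues j : ℂ) * inner ℂ (hq.eigenvectorBasis j) y := by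
    rw [← hsymq (hq.eigenvectorBasis j) y]
    have : Matrix.toEuclideanLin q (hq.eigenvectorBasis j)
        = hq.eigenvalues j • (hq.eigenvectorBasis j : H) := congrArg (WithLp.toLp 2) (hq.mulVec_eigenvectorBasis j)
    rw [this, RCLike.real_smul_eq_coe_smul (K := ℂ), inner_smul_left, RCLike.conj_ofReal]
    rfl
  have h3 : (inner ℂ (hq.eigenvectorBasis j) (Matrix.toEuclideanLin q y) : ℂ)
      = (hp.eigenvalues i : ℂ) * inner ℂ (hq.eigenvectorBasis j) y := by
    rw [h1, RCLike.real_smul_eq_coe_smul (K := ℂ), inner_smul_right]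
    rfl
  have h4 : ((hq.eigenvalues j : ℂ) - (hp.eigenvalues i : ℂ))
      * inner ℂ (hq.eigenvectorBasis j) y = 0 := by
    rw [sub_mul, ← h2, ← h3, sub_self]
  rcases mul_eq_zero.mp h4 with h | h
  · exfalso
    apply hne
    have := sub_eq_zero.mp h
    exact_mod_cast this
  · exact h

lemma finrank_le_of (T : H →ₗ[ℂ] H) (E F : Submodule ℂ H) (hmap : ∀ x ∈ E, T x ∈ F)
    (hinj : ∀ x ∈ E, T x = 0 → x = 0) :
    Module.finrank ℂ E ≤ Module.finrank ℂ F := by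
  let g : E →ₗ[ℂ] F := (T.comp E.subtype).codRestrict F (fun x => hmap x x.2)
  have hg : Function.Injective g := by
    intro x y hxy
    have h1 : T (x : H) = T (y : H) := congrArg Subtype.val hxy
    have h2 : T ((x : H) - (y : H)) = 0 := by rw [map_sub, h1, sub_self]
    have h3 : (x : H) - (y : H) = 0 := hinj _ (Submodule.sub_mem _ x.2 y.2) h2
    exact Subtype.ext (sub_eq_zero.mp h3)
  exact LinearMap.finrank_le_finrank_of_injective hg

end NoHalf

open NoHalf

/-- For odd `m`, no contraction is even approximately a partial isometry with
complementary range and source projections. -/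
theorem no_approximate_halving_partial_isometry_odd :
    ∃ ε : ℝ, 0 < ε ∧ ∀ m : ℕ, Odd m → ∀ b : Matrix (Fin m) (Fin m) ℂ,
      opNorm b ≤ 1 →
      ¬(opNorm (bᴴ * b - (bᴴ * b) * (bᴴ * b)) < ε ∧
        opNorm (bᴴ * b + b * bᴴ - 1) < ε) := by

  classical
  refine ⟨3/16, by norm_num, ?_⟩
  rintro m hm b hb ⟨h1, h2⟩
  have hp : (bᴴ * b).IsHermitian := Matrix.isHermitian_conjTranspose_mul_self b
  have hq : (b * bᴴ).IsHermitian := Matrix.isHermitian_mul_conjTranspose_self b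
  set lam := hp.eigenvalues with hlam
  set mu := hq.eigenvalues with hmu
  set v := hp.eigenvectorBasis with hv
  set w := hq.eigenvectorBasis with hw
  have hqct : (bᴴ)ᴴ * bᴴ = b * bᴴ := by rw [conjTranspose_conjTranspose]
  -- eigenvalue bounds for p
  have hlamb : ∀ i, 0 ≤ lam i ∧ lam i ≤ 1 ∧ lam i * (1 - lam i) < 3/16 := by
    intro i
    refine eig_bounds b hb h1 (v i) (lam i) (v.orthonormal.1 i) ?_
    exact congrArg (WithLp.toLp 2) (hp.mulVec_eigenvectorBasis i)
  -- eigenvalue bounds for q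
  have hmub : ∀ j, 0 ≤ mu j ∧ mu j ≤ 1 ∧ mu j * (1 - mu j) < 3/16 := by
    intro j
    have hwj : ‖(w j : EuclideanSpace ℂ (Fin m))‖ = 1 := w.orthonormal.1 j
    have heig : Matrix.toEuclideanLin (b * bᴴ) (w j) = mu j • (w j : EuclideanSpace ℂ (Fin m)) :=
      congrArg (WithLp.toLp 2) (hq.mulVec_eigenvectorBasis j)
    have hmu0 : ‖Matrix.toEuclideanLin bᴴ (w j)‖ ^ 2 = mu j := by
      rw [norm_sq_apply, hqct, heig, re_inner_smul _ _ hwj]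
    by_cases h0 : mu j = 0
    · refine ⟨le_of_eq h0.symm, by rw [h0]; norm_num, by rw [h0]; norm_num⟩
    · set y : EuclideanSpace ℂ (Fin m) := Matrix.toEuclideanLin bᴴ (w j) with hy
      have hypos : 0 < mu j := lt_of_le_of_ne (hmu0 ▸ sq_nonneg _) (Ne.symm h0)
      have hyne : ‖y‖ ≠ 0 := by
        intro hcon
        rw [← hmu0, hcon] at hypos; norm_num at hypos
      have heigy : Matrix.toEuclideanLin (bᴴ * b) y = mu j • y := by
        rw [hy, ← toEuclideanLin_mul, mul_assoc, toEuclideanLin_mul, heig,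
          RCLike.real_smul_eq_coe_smul (K := ℂ), _root_.map_smul,
          RCLike.real_smul_eq_coe_smul (K := ℂ)]
      set u : EuclideanSpace ℂ (Fin m) := ((‖y‖⁻¹ : ℝ) : ℂ) • y with hu
      have hun : ‖u‖ = 1 := by
        rw [hu, norm_smul, Complex.norm_real, Real.norm_eq_abs,
          abs_of_nonneg (by positivity), inv_mul_cancel₀ hyne]
      have heigu : Matrix.toEuclideanLin (bᴴ * b) u = mu j • u := by
        rw [hu, _root_.map_smul, heigy, RCLike.real_smul_eq_coe_smul (K := ℂ),
          smul_comm, RCLike.real_smul_eq_coe_smul (K := ℂ)]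
      exact eig_bounds b hb h1 u (mu j) hun heigu
  have hlgap : ∀ i, (¬ 1/2 < lam i → lam i ≤ 1/4) ∧ (1/2 < lam i → 3/4 ≤ lam i) := by
    intro i
    obtain ⟨a1, a2, a3⟩ := hlamb i
    constructor <;> intro h <;> nlinarith
  have hmgap : ∀ j, (¬ 1/2 < mu j → mu j ≤ 1/4) ∧ (1/2 < mu j → 3/4 ≤ mu j) := by
    intro j
    obtain ⟨a1, a2, a3⟩ := hmub j
    constructor <;> intro h <;> nlinarith
  -- subspaces
  set E := Submodule.span ℂ (v '' {i | 1/2 < lam i}) with hE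
  set E' := Submodule.span ℂ (v '' {i | ¬ 1/2 < lam i}) with hE'
  set F := Submodule.span ℂ (w '' {j | 1/2 < mu j}) with hF
  set F' := Submodule.span ℂ (w '' {j | ¬ 1/2 < mu j}) with hF'
  -- intersection bound, generic
  have inter_le : ∀ (A B : Submodule ℂ (EuclideanSpace ℂ (Fin m))),
      (∀ x, x ∈ A → x ∈ B → ‖x‖ = 1 → False) →
      Module.finrank ℂ A + Module.finrank ℂ B ≤ m := by
    intro A B hAB
    by_contra hcon
    push_neg at hcon
    have hsum := Submodule.finrank_sup_add_finrank_inf_eq A B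
    have hle : Module.finrank ℂ ↥(A ⊔ B) ≤ m := by
      have := Submodule.finrank_le (A ⊔ B)
      rwa [finrank_euclideanSpace_fin] at this
    have hpos : 0 < Module.finrank ℂ ↥(A ⊓ B) := by omega
    have : Nontrivial ↥(A ⊓ B) := Module.finrank_pos_iff.mp hpos
    obtain ⟨x, hxne⟩ := exists_ne (0 : ↥(A ⊓ B))
    have hx0 : (x : EuclideanSpace ℂ (Fin m)) ≠ 0 := fun hc => hxne (Subtype.ext hc)
    have hxn : ‖(x : EuclideanSpace ℂ (Fin m))‖ ≠ 0 := norm_ne_zero_iff.mpr hx0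
    set ux : EuclideanSpace ℂ (Fin m) := ((‖(x : EuclideanSpace ℂ (Fin m))‖⁻¹ : ℝ) : ℂ) • x with hux
    have huxn : ‖ux‖ = 1 := by
      rw [hux, norm_smul, Complex.norm_real, Real.norm_eq_abs,
        abs_of_nonneg (by positivity), inv_mul_cancel₀ hxn]
    exact hAB ux (Submodule.smul_mem _ _ (x.2.1)) (Submodule.smul_mem _ _ (x.2.2)) huxn
  -- Claim 1 : finrank E + finrank F ≤ m
  have claim1 : Module.finrank ℂ E + Module.finrank ℂ F ≤ m := by
    refine inter_le E F fun x hxE hxF hxn => ?_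
    have hp34 : (3:ℝ)/4 * ‖x‖^2 ≤ RCLike.re (inner ℂ x (Matrix.toEuclideanLin (bᴴ*b) x) : ℂ) :=
      qf_ge _ hp _ _ (fun i hi => (hlgap i).2 hi) x hxE
    have hq34 : (3:ℝ)/4 * ‖x‖^2 ≤ RCLike.re (inner ℂ x (Matrix.toEuclideanLin (b*bᴴ) x) : ℂ) :=
      qf_ge _ hq _ _ (fun j hj => (hmgap j).2 hj) x hxF
    have hcr := cross_bound b h2 x hxn
    rw [abs_lt] at hcr
    rw [hxn, one_pow, mul_one] at hp34 hq34
    linarith [hcr.2]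
  -- Claim 2 : finrank E' + finrank F' ≤ m
  have claim2 : Module.finrank ℂ E' + Module.finrank ℂ F' ≤ m := by
    refine inter_le E' F' fun x hxE hxF hxn => ?_
    have hp14 : RCLike.re (inner ℂ x (Matrix.toEuclideanLin (bᴴ*b) x) : ℂ) ≤ (1:ℝ)/4 * ‖x‖^2 :=
      qf_le _ hp _ _ (fun i hi => (hlgap i).1 hi) x hxE
    have hq14 : RCLike.re (inner ℂ x (Matrix.toEuclideanLin (b*bᴴ) x) : ℂ) ≤ (1:ℝ)/4 * ‖x‖^2 :=
      qf_le _ hq _ _ (fun j hj => (hmgap j).1 hj) x hxF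
    have hcr := cross_bound b h2 x hxn
    rw [abs_lt] at hcr
    rw [hxn, one_pow, mul_one] at hp14 hq14
    linarith [hcr.1]
  -- Claim 3 : finrank E ≤ finrank F  via x ↦ b x
  have claim3 : Module.finrank ℂ E ≤ Module.finrank ℂ F := by
    refine finrank_le_of (Matrix.toEuclideanLin b) E F ?_ ?_
    · intro x hx
      have hspan : E ≤ F.comap (Matrix.toEuclideanLin b) := by
        rw [hE]
        rw [Submodule.span_le]
        rintro _ ⟨i, hi, rfl⟩
        rw [SetLike.mem_coe, Submodule.mem_comap, mem_span_iff]
        intro j hj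
        refine eig_inner_zero (bᴴ*b) (b*bᴴ) b hp hq (mul_assoc b bᴴ b) i j ?_
        intro hcon
        have heq : mu j = lam i := hcon
        have hi' : 1/2 < lam i := hi
        exact hj (by linarith)
      exact hspan hx
    · intro x hx hbx
      have h34 : (3:ℝ)/4 * ‖x‖^2 ≤ RCLike.re (inner ℂ x (Matrix.toEuclideanLin (bᴴ*b) x) : ℂ) :=
        qf_ge _ hp _ _ (fun i hi => (hlgap i).2 hi) x hx
      rw [← norm_sq_apply, hbx, norm_zero] at h34
      have : ‖x‖ = 0 := by nlinarith [norm_nonneg x, sq_nonneg (‖x‖)]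
      exact norm_eq_zero.mp this
  -- Claim 4 : finrank F ≤ finrank E  via x ↦ bᴴ x
  have claim4 : Module.finrank ℂ F ≤ Module.finrank ℂ E := by
    refine finrank_le_of (Matrix.toEuclideanLin bᴴ) F E ?_ ?_
    · intro x hx
      have hspan : F ≤ E.comap (Matrix.toEuclideanLin bᴴ) := by
        rw [hF]
        rw [Submodule.span_le]
        rintro _ ⟨j, hj, rfl⟩
        rw [SetLike.mem_coe, Submodule.mem_comap, mem_span_iff]
        intro i hi
        refine eig_inner_zero (b*bᴴ) (bᴴ*b) bᴴ hq hp (mul_assoc bᴴ b bᴴ) j i ?_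
        intro hcon
        have heq : lam i = mu j := hcon
        have hj' : 1/2 < mu j := hj
        have hle := (hlgap i).1 hi
        exact absurd (by linarith : (1:ℝ)/2 < lam i) hi
      exact hspan hx
    · intro x hx hbx
      have h34 : (3:ℝ)/4 * ‖x‖^2 ≤ RCLike.re (inner ℂ x (Matrix.toEuclideanLin (b*bᴴ) x) : ℂ) :=
        qf_ge _ hq _ _ (fun j hj => (hmgap j).2 hj) x hx
      have hnq : ‖Matrix.toEuclideanLin bᴴ x‖ ^ 2
          = RCLike.re (inner ℂ x (Matrix.toEuclideanLin (b*bᴴ) x) : ℂ) := by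
        rw [norm_sq_apply, hqct]
      rw [← hnq, hbx, norm_zero] at h34
      have : ‖x‖ = 0 := by nlinarith [norm_nonneg x, sq_nonneg (‖x‖)]
      exact norm_eq_zero.mp this
  -- dimension counts
  have hEcard : Module.finrank ℂ E + Module.finrank ℂ E' = m := by
    rw [hE, hE', finrank_span, finrank_span,
      Finset.card_filter_add_card_filter_not, Finset.card_univ, Fintype.card_fin]
  have hFcard : Module.finrank ℂ F + Module.finrank ℂ F' = m := by
    rw [hF, hF', finrank_span, finrank_span,
      Finset.card_filter_add_card_filter_not, Finset.card_univ, Fintype.card_fin]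
  obtain ⟨r, hr⟩ := hm
  omega
end

section
/- Let α_m : M_m(ℂ) → M_{m+1}(ℂ) be the embedding adding a zero last row and column, and β_m : M_{m+1}(ℂ) → M_m(ℂ) the map deleting the last row and column. Then for every a ∈ M_{m+1}(ℂ) with ‖a‖_OP ≤ 1, ‖a − α_m(β_m(a))‖_HS < sqrt(2/m). -/
/-- Embedding `M_m → M_{m+1}` by adding a zero last row and column. -/
def matAlpha {m : ℕ} (a : Matrix (Fin m) (Fin m) ℂ) :
    Matrix (Fin (m + 1)) (Fin (m + 1)) ℂ :=
  Matrix.of fun i j =>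
    if hi : (i : ℕ) < m then if hj : (j : ℕ) < m then a ⟨i, hi⟩ ⟨j, hj⟩ else 0 else 0

/-- Compression `M_{m+1} → M_m` deleting the last row and column. -/
def matBeta {m : ℕ} (a : Matrix (Fin (m + 1)) (Fin (m + 1)) ℂ) :
    Matrix (Fin m) (Fin m) ℂ :=
  Matrix.of fun i j => a i.castSucc j.castSucc

lemma vecNorm_one_iff {n : ℕ} (ξ : Fin n → ℂ) (h : vecNorm ξ = 1) :
    ∑ j, ‖ξ j‖ ^ 2 = 1 := by
  unfold vecNorm at h
  exact Real.sqrt_eq_one.mp h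

lemma opNorm_bddAbove {n : ℕ} (a : Matrix (Fin n) (Fin n) ℂ) :
    BddAbove {r : ℝ | ∃ ξ : Fin n → ℂ, vecNorm ξ = 1 ∧ r = vecNorm (a.mulVec ξ)} := by
  refine ⟨Real.sqrt (∑ i, ∑ j, ‖a i j‖ ^ 2), ?_⟩
  rintro r ⟨ξ, hξ, rfl⟩
  have hξ' : ∑ j, ‖ξ j‖ ^ 2 = 1 := vecNorm_one_iff ξ hξ
  unfold vecNorm
  apply Real.sqrt_le_sqrt
  apply Finset.sum_le_sum
  intro i _
  have h1 : ‖a.mulVec ξ i‖ ≤ ∑ j, ‖a i j‖ * ‖ξ j‖ := by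
    calc ‖a.mulVec ξ i‖ = ‖∑ j, a i j * ξ j‖ := by
          simp [Matrix.mulVec, dotProduct]
      _ ≤ ∑ j, ‖a i j * ξ j‖ := norm_sum_le _ _
      _ = ∑ j, ‖a i j‖ * ‖ξ j‖ := by simp [norm_mul]
  calc ‖a.mulVec ξ i‖ ^ 2 ≤ (∑ j, ‖a i j‖ * ‖ξ j‖) ^ 2 := by
        apply pow_le_pow_left₀ (norm_nonneg _) h1
    _ ≤ (∑ j, ‖a i j‖ ^ 2) * (∑ j, ‖ξ j‖ ^ 2) :=
        Finset.sum_mul_sq_le_sq_mul_sq _ _ _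
    _ = ∑ j, ‖a i j‖ ^ 2 := by rw [hξ']; ring

lemma vecNorm_mulVec_le_one {n : ℕ} (a : Matrix (Fin n) (Fin n) ℂ)
    (ha : opNorm a ≤ 1) (ξ : Fin n → ℂ) (hξ : vecNorm ξ = 1) :
    vecNorm (a.mulVec ξ) ≤ 1 :=
  le_trans (le_csSup (opNorm_bddAbove a) ⟨ξ, hξ, rfl⟩) ha

/-- Each row of a contraction has Euclidean norm at most 1 (squared form). -/
lemma row_sq_sum_le_one {n : ℕ} (a : Matrix (Fin n) (Fin n) ℂ)
    (ha : opNorm a ≤ 1) (i : Fin n) : ∑ j, ‖a i j‖ ^ 2 ≤ 1 := by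
  set s := ∑ j, ‖a i j‖ ^ 2 with hs
  have hs0 : 0 ≤ s := Finset.sum_nonneg fun _ _ => sq_nonneg _
  rcases eq_or_lt_of_le hs0 with h | h
  · linarith
  · set r := Real.sqrt s with hr
    have hr0 : 0 < r := Real.sqrt_pos.mpr h
    have hr2 : r ^ 2 = s := Real.sq_sqrt hs0
    set ξ : Fin n → ℂ := fun j => (starRingEnd ℂ) (a i j) / (r : ℂ) with hξdef
    have hnorm : ∀ j, ‖ξ j‖ ^ 2 = ‖a i j‖ ^ 2 / s := by
      intro j
      simp only [hξdef, norm_div, Complex.norm_real, RCLike.norm_conj,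
        Real.norm_eq_abs, abs_of_pos hr0, div_pow, hr2]
    have hξ : vecNorm ξ = 1 := by
      unfold vecNorm
      rw [show (∑ j, ‖ξ j‖ ^ 2) = 1 by
        simp only [hnorm]
        rw [← Finset.sum_div, ← hs, div_self (ne_of_gt h)]]
      exact Real.sqrt_one
    have hterm : ∀ x : Fin n, a i x * (starRingEnd ℂ) (a i x) = ((‖a i x‖ ^ 2 : ℝ) : ℂ) := by
      intro x
      rw [Complex.mul_conj]
      exact congrArg _ (by rw [Complex.normSq_eq_norm_sq])
    have hentry : (a.mulVec ξ) i = (s : ℂ) / (r : ℂ) := by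
      simp only [Matrix.mulVec, dotProduct, hξdef, mul_div_assoc']
      rw [← Finset.sum_div]
      congr 1
      calc (∑ x, a i x * (starRingEnd ℂ) (a i x))
          = ∑ x, ((‖a i x‖ ^ 2 : ℝ) : ℂ) := by simp_rw [hterm]
        _ = (s : ℂ) := by rw [hs]; norm_cast
    have hne : ‖(a.mulVec ξ) i‖ = r := by
      rw [hentry]
      rw [show (s : ℂ) / (r : ℂ) = ((s / r : ℝ) : ℂ) by push_cast; ring]
      rw [Complex.norm_real, Real.norm_eq_abs, abs_of_pos (div_pos h hr0)]
      rw [← hr2, sq, mul_div_assoc, div_self hr0.ne', mul_one]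
    have hle : r ≤ vecNorm (a.mulVec ξ) := by
      unfold vecNorm
      rw [show r = Real.sqrt (r ^ 2) from (Real.sqrt_sq hr0.le).symm]
      apply Real.sqrt_le_sqrt
      rw [← hne]
      exact Finset.single_le_sum (f := fun k => ‖(a.mulVec ξ) k‖ ^ 2)
        (fun _ _ => sq_nonneg _) (Finset.mem_univ i)
    have := le_trans hle (vecNorm_mulVec_le_one a ha ξ hξ)
    nlinarith

/-- Each column of a contraction has Euclidean norm at most 1 (squared form). -/
lemma col_sq_sum_le_one {n : ℕ} (a : Matrix (Fin n) (Fin n) ℂ)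
    (ha : opNorm a ≤ 1) (j : Fin n) : ∑ i, ‖a i j‖ ^ 2 ≤ 1 := by
  set ξ : Fin n → ℂ := Pi.single j 1 with hξdef
  have hξ : vecNorm ξ = 1 := by
    unfold vecNorm
    rw [show (∑ k, ‖ξ k‖ ^ 2) = 1 by
      simp [hξdef, Pi.single_apply, apply_ite norm, Finset.sum_ite_eq']]
    exact Real.sqrt_one
  have hmv : a.mulVec ξ = fun i => a i j := by
    funext i
    simp [hξdef, Matrix.mulVec_single]
  have h : Real.sqrt (∑ i, ‖a i j‖ ^ 2) ≤ 1 := by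
    have h0 := vecNorm_mulVec_le_one a ha ξ hξ
    unfold vecNorm at h0
    rw [hmv] at h0
    exact h0
  have h0 : (0 : ℝ) ≤ ∑ i, ‖a i j‖ ^ 2 := Finset.sum_nonneg fun _ _ => sq_nonneg _
  nlinarith [Real.sq_sqrt h0, Real.sqrt_nonneg (∑ i, ‖a i j‖ ^ 2)]

/-- A contraction in `M_{m+1}` is within `√(2/m)` in normalized HS norm of its
corner compression. -/
theorem hsNorm_sub_corner_lt {m : ℕ} (hm : 0 < m)
    (a : Matrix (Fin (m + 1)) (Fin (m + 1)) ℂ) (ha : opNorm a ≤ 1) :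
    hsNorm (a - matAlpha (matBeta a)) < Real.sqrt (2 / m) := by
  set d := a - matAlpha (matBeta a) with hd
  have hd_corner : ∀ (i j : Fin m), d i.castSucc j.castSucc = 0 := by
    intro i j
    simp only [hd, Matrix.sub_apply, matAlpha, matBeta, Matrix.of_apply,
      Fin.coe_castSucc, i.isLt, j.isLt, dif_pos]
    rw [sub_eq_zero]

  have hd_last_row : ∀ j : Fin (m + 1), d (Fin.last m) j = a (Fin.last m) j := by
    intro j
    simp [hd, matAlpha, Fin.val_last]
  have hd_last_col : ∀ i : Fin (m + 1), d i (Fin.last m) = a i (Fin.last m) := by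
    intro i
    simp [hd, matAlpha, Fin.val_last]
  have hS : (∑ i, ∑ j, ‖d i j‖ ^ 2) ≤ 2 := by
    rw [Fin.sum_univ_castSucc (f := fun i => ∑ j, ‖d i j‖ ^ 2)]
    have h1 : (∑ i : Fin m, ∑ j, ‖d i.castSucc j‖ ^ 2)
        = ∑ i : Fin m, ‖a i.castSucc (Fin.last m)‖ ^ 2 := by
      apply Finset.sum_congr rfl
      intro i _
      rw [Fin.sum_univ_castSucc (f := fun j => ‖d i.castSucc j‖ ^ 2)]
      simp [hd_corner i, hd_last_col]
    have h2 : (∑ j, ‖d (Fin.last m) j‖ ^ 2) = ∑ j, ‖a (Fin.last m) j‖ ^ 2 := by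
      apply Finset.sum_congr rfl
      intro j _
      rw [hd_last_row]
    rw [h1, h2]
    have hcol : (∑ i : Fin m, ‖a i.castSucc (Fin.last m)‖ ^ 2) ≤ 1 := by
      have hfull := col_sq_sum_le_one a ha (Fin.last m)
      rw [Fin.sum_univ_castSucc (f := fun i => ‖a i (Fin.last m)‖ ^ 2)] at hfull
      nlinarith [sq_nonneg ‖a (Fin.last m) (Fin.last m)‖]
    have hrow := row_sq_sum_le_one a ha (Fin.last m)
    linarith
  have hS0 : 0 ≤ ∑ i, ∑ j, ‖d i j‖ ^ 2 :=
    Finset.sum_nonneg fun _ _ => Finset.sum_nonneg fun _ _ => sq_nonneg _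
  unfold hsNorm
  apply Real.sqrt_lt_sqrt
  · positivity
  · have hmpos : (0 : ℝ) < m := by exact_mod_cast hm
    have hm1 : (0 : ℝ) < (m : ℝ) + 1 := by linarith
    calc (1 / ((m + 1 : ℕ) : ℝ)) * ∑ i, ∑ j, ‖d i j‖ ^ 2
        ≤ (1 / ((m + 1 : ℕ) : ℝ)) * 2 := by
          apply mul_le_mul_of_nonneg_left hS
          positivity
      _ = 2 / ((m : ℝ) + 1) := by push_cast; ring
      _ < 2 / (m : ℝ) := by
          apply div_lt_div_of_pos_left (by norm_num) hmpos (by linarith)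
end
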